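/- Let N ≥ 2, ħ ∈ ℝ, V: ℝ² → ℝ smooth, f_{j,0}: ℝ² → ℝ smooth for 0 ≤ j ≤ N satisfying ∂_x f_{j−1,0} + ∂_y f_{j,0} = 0 on ℝ² for all 0 ≤ j ≤ N+1 (with f_{−1,0} = f_{N+1,0} := 0), and f_{j,2}: ℝ² → ℝ smooth for 0 ≤ j ≤ N−2 (zero for indices outside this range). Define φ_{j,1} := ((j+1)/2) ∂_x f_{j+1,0} + ((N−j)/2) ∂_y f_{j,0}, φ_{j,2} := (1/2) Σ_{a=0}^{2} C(j+a, a) C(N−j−a, 2−a) ∂_x^a ∂_y^{2−a} f_{j+a,0} (with φ_{−1,2} := 0), and Q_{j,2} := 2 ∂_x φ_{j−1,2} + 2 ∂_y φ_{j,2} + ∂_x² φ_{j,1} + ∂_y² φ_{j,1}. Suppose that for all 0 ≤ j ≤ N−1 the ℓ = 1 quantum determining equations hold: 2(∂_x f_{j−1,2} + ∂_y f_{j,2}) = (j+1) f_{j+1,0} ∂_x V + (N−j) f_{j,0} ∂_y V + ħ² Q_{j,2}. Then V satisfies the same linear compatibility equation as in the classical case: Σ_{j=0}^{N−1} (−1)^j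 ∂_x^{N−1−j} ∂_y^j [ (j+1) f_{j+1,0} ∂_x V + (N−j) f_{j,0} ∂_y V ] = 0 identically on ℝ². -/

import Mathlib

noncomputable section

/-- Partial derivative with respect to `x` of a function on `ℝ²`. -/
def pdx (f : ℝ × ℝ → ℝ) : ℝ × ℝ → ℝ := fun q => fderiv ℝ f q (1, 0)

/-- Partial derivative with respect to `y` of a function on `ℝ²`. -/
def pdy (f : ℝ × ℝ → ℝ) : ℝ × ℝ → ℝ := fun q => fderiv ℝ f q (0, 1)

/-- Binomial coefficient with integer entries, equal to `0` when the lower entry is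
negative or exceeds the upper entry. -/
def intChoose (n k : ℤ) : ℝ :=
  if 0 ≤ k ∧ k ≤ n then (n.toNat.choose k.toNat : ℝ) else 0

/-- `φ_{j,1} = ((j+1)/2) ∂_x f_{j+1,0} + ((N−j)/2) ∂_y f_{j,0}`. -/
def phi1 (N : ℕ) (f0 : ℤ → ℝ × ℝ → ℝ) (j : ℤ) : ℝ × ℝ → ℝ := fun q =>
  ((j : ℝ) + 1) / 2 * pdx (f0 (j + 1)) q + ((N : ℝ) - (j : ℝ)) / 2 * pdy (f0 j) q

/-- `φ_{j,2} = (1/2) Σ_{a=0}^{2} C(j+a,a) C(N−j−a,2−a) ∂_x^a ∂_y^{2−a} f_{j+a,0}`,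
with the convention `φ_{−1,2} = 0`. -/
def phi2 (N : ℕ) (f0 : ℤ → ℝ × ℝ → ℝ) (j : ℤ) : ℝ × ℝ → ℝ :=
  if j = -1 then 0 else fun q =>
    (1 / 2) * ∑ a ∈ Finset.range 3,
      intChoose (j + (a : ℤ)) (a : ℤ) * intChoose ((N : ℤ) - j - (a : ℤ)) (2 - (a : ℤ)) *
        (pdx^[a] (pdy^[2 - a] (f0 (j + (a : ℤ))))) q

/-- The quantum correction `Q_{j,2} = 2∂_x φ_{j−1,2} + 2∂_y φ_{j,2} + ∂_x² φ_{j,1} + ∂_y² φ_{j,1}`. -/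
def Q2 (N : ℕ) (f0 : ℤ → ℝ × ℝ → ℝ) (j : ℤ) : ℝ × ℝ → ℝ := fun q =>
  2 * pdx (phi2 N f0 (j - 1)) q + 2 * pdy (phi2 N f0 j) q +
    (pdx^[2] (phi1 N f0 j)) q + (pdy^[2] (phi1 N f0 j)) q

open Function

local notation "Smooth" => ContDiff ℝ (⊤ : ℕ∞)

lemma sm_diff {f : ℝ × ℝ → ℝ} (hf : Smooth f) : Differentiable ℝ f :=
  hf.differentiable (by simp)

lemma smooth_pdx {f : ℝ × ℝ → ℝ} (hf : Smooth f) : Smooth (pdx f) :=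
  (hf.fderiv_right (m := (⊤:ℕ∞)) (by exact_mod_cast le_top)).clm_apply contDiff_const

lemma smooth_pdy {f : ℝ × ℝ → ℝ} (hf : Smooth f) : Smooth (pdy f) :=
  (hf.fderiv_right (m := (⊤:ℕ∞)) (by exact_mod_cast le_top)).clm_apply contDiff_const

lemma smooth_pdx_iter {f : ℝ × ℝ → ℝ} (hf : Smooth f) (n : ℕ) : Smooth (pdx^[n] f) := by
  induction n generalizing f with
  | zero => exact hf
  | succ n ih => rw [Function.iterate_succ_apply]; exact ih (smooth_pdx hf)

lemma smooth_pdy_iter {f : ℝ × ℝ → ℝ} (hf : Smooth f) (n : ℕ) : Smooth (pdy^[n] f) := by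
  induction n generalizing f with
  | zero => exact hf
  | succ n ih => rw [Function.iterate_succ_apply]; exact ih (smooth_pdy hf)

lemma pdx_pdy_comm {f : ℝ × ℝ → ℝ} (hf : Smooth f) : pdx (pdy f) = pdy (pdx f) := by
  funext q
  have hdf : Smooth (fderiv ℝ f) :=
    hf.fderiv_right (m := (⊤:ℕ∞)) (by exact_mod_cast le_top)
  have h1 : ∀ v w : ℝ × ℝ, fderiv ℝ (fun p => fderiv ℝ f p v) q w
      = fderiv ℝ (fderiv ℝ f) q w v := by
    intro v w
    rw [fderiv_clm_apply (hdf.differentiable (by simp) q)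
      (differentiableAt_const v)]
    simp
  have hsymm : IsSymmSndFDerivAt ℝ f q :=
    (hf.contDiffAt).isSymmSndFDerivAt (by simp only [minSmoothness_of_isRCLikeNormedField]; exact WithTop.coe_le_coe.mpr (le_top : (2:ℕ∞) ≤ ⊤))
  show fderiv ℝ (fun p => fderiv ℝ f p (0,1)) q (1,0)
      = fderiv ℝ (fun p => fderiv ℝ f p (1,0)) q (0,1)
  rw [h1, h1]
  exact hsymm _ _

-- zero lemmas
lemma pdx_zero : pdx (fun _ => (0:ℝ)) = fun _ => 0 := by
  funext q; simp [pdx]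

lemma pdy_zero : pdy (fun _ => (0:ℝ)) = fun _ => 0 := by
  funext q; simp [pdy]

lemma pdx_iter_zero (n : ℕ) : pdx^[n] (fun _ => (0:ℝ)) = fun _ => 0 := by
  induction n with
  | zero => rfl
  | succ n ih => rw [Function.iterate_succ_apply, pdx_zero, ih]

lemma pdy_iter_zero (n : ℕ) : pdy^[n] (fun _ => (0:ℝ)) = fun _ => 0 := by
  induction n with
  | zero => rfl
  | succ n ih => rw [Function.iterate_succ_apply, pdy_zero, ih]

-- linearity
lemma pdx_add {f g : ℝ × ℝ → ℝ} (hf : Smooth f) (hg : Smooth g) :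
    pdx (fun q => f q + g q) = fun q => pdx f q + pdx g q := by
  funext q
  simp only [pdx]
  rw [fderiv_fun_add (sm_diff hf q) (sm_diff hg q)]
  rfl

lemma pdy_add {f g : ℝ × ℝ → ℝ} (hf : Smooth f) (hg : Smooth g) :
    pdy (fun q => f q + g q) = fun q => pdy f q + pdy g q := by
  funext q
  simp only [pdy]
  rw [fderiv_fun_add (sm_diff hf q) (sm_diff hg q)]
  rfl

lemma pdx_cmul {f : ℝ × ℝ → ℝ} (hf : Smooth f) (c : ℝ) :
    pdx (fun q => c * f q) = fun q => c * pdx f q := by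
  funext q
  simp only [pdx]
  rw [fderiv_const_mul (sm_diff hf q)]
  rfl

lemma pdy_cmul {f : ℝ × ℝ → ℝ} (hf : Smooth f) (c : ℝ) :
    pdy (fun q => c * f q) = fun q => c * pdy f q := by
  funext q
  simp only [pdy]
  rw [fderiv_const_mul (sm_diff hf q)]
  rfl

lemma smooth_addf {f g : ℝ × ℝ → ℝ} (hf : Smooth f) (hg : Smooth g) :
    Smooth (fun q => f q + g q) := hf.add hg

lemma smooth_cmul {f : ℝ × ℝ → ℝ} (hf : Smooth f) (c : ℝ) :
    Smooth (fun q => c * f q) := contDiff_const.mul hf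

lemma pdx_iter_add {f g : ℝ × ℝ → ℝ} (hf : Smooth f) (hg : Smooth g) (n : ℕ) :
    pdx^[n] (fun q => f q + g q) = fun q => pdx^[n] f q + pdx^[n] g q := by
  induction n generalizing f g with
  | zero => rfl
  | succ n ih =>
    rw [Function.iterate_succ_apply, Function.iterate_succ_apply,
      Function.iterate_succ_apply (f := pdx) (n := n) (x := g), pdx_add hf hg,
      ih (smooth_pdx hf) (smooth_pdx hg)]

lemma pdy_iter_add {f g : ℝ × ℝ → ℝ} (hf : Smooth f) (hg : Smooth g) (n : ℕ) :
    pdy^[n] (fun q => f q + g q) = fun q => pdy^[n] f q + pdy^[n] g q := by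
  induction n generalizing f g with
  | zero => rfl
  | succ n ih =>
    rw [Function.iterate_succ_apply, Function.iterate_succ_apply,
      Function.iterate_succ_apply (f := pdy) (n := n) (x := g), pdy_add hf hg,
      ih (smooth_pdy hf) (smooth_pdy hg)]

lemma pdx_iter_cmul {f : ℝ × ℝ → ℝ} (hf : Smooth f) (c : ℝ) (n : ℕ) :
    pdx^[n] (fun q => c * f q) = fun q => c * pdx^[n] f q := by
  induction n generalizing f with
  | zero => rfl
  | succ n ih =>
    rw [Function.iterate_succ_apply, pdx_cmul hf, ih (smooth_pdx hf),
      ← Function.iterate_succ_apply]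

lemma pdy_iter_cmul {f : ℝ × ℝ → ℝ} (hf : Smooth f) (c : ℝ) (n : ℕ) :
    pdy^[n] (fun q => c * f q) = fun q => c * pdy^[n] f q := by
  induction n generalizing f with
  | zero => rfl
  | succ n ih =>
    rw [Function.iterate_succ_apply, pdy_cmul hf, ih (smooth_pdy hf),
      ← Function.iterate_succ_apply]

-- commutation of iterates
lemma pdy_iter_pdx {f : ℝ × ℝ → ℝ} (hf : Smooth f) (n : ℕ) :
    pdy^[n] (pdx f) = pdx (pdy^[n] f) := by
  induction n generalizing f with
  | zero => rfl
  | succ n ih =>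
    rw [Function.iterate_succ_apply, ← pdx_pdy_comm hf, ih (smooth_pdy hf),
      ← Function.iterate_succ_apply]

lemma pdx_iter_pdy {f : ℝ × ℝ → ℝ} (hf : Smooth f) (n : ℕ) :
    pdx^[n] (pdy f) = pdy (pdx^[n] f) := by
  induction n generalizing f with
  | zero => rfl
  | succ n ih =>
    rw [Function.iterate_succ_apply, pdx_pdy_comm hf, ih (smooth_pdx hf),
      ← Function.iterate_succ_apply]

lemma pdx_pdy_iter_comm {f : ℝ × ℝ → ℝ} (hf : Smooth f) (a b : ℕ) :
    pdx^[a] (pdy^[b] f) = pdy^[b] (pdx^[a] f) := by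
  induction b generalizing f with
  | zero => rfl
  | succ b ih =>
    rw [Function.iterate_succ_apply, ih (smooth_pdy hf), pdx_iter_pdy hf a,
      ← Function.iterate_succ_apply]

/-- Normal form for a mixed derivative stack. -/
lemma Dmono {g : ℝ × ℝ → ℝ} (hg : Smooth g) (m k a b : ℕ) :
    pdx^[m] (pdy^[k] (pdx^[a] (pdy^[b] g))) = pdx^[m+a] (pdy^[k+b] g) := by
  rw [← pdx_pdy_iter_comm (smooth_pdy_iter hg b) a k,
    ← Function.iterate_add_apply pdx m a, ← Function.iterate_add_apply pdy k b]

section reduction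

variable {N : ℕ} {f0 : ℤ → ℝ × ℝ → ℝ}
variable (hs : ∀ j : ℤ, Smooth (f0 j))
variable (hrel : ∀ j : ℤ, pdy (f0 j) = fun q => -pdx (f0 (j-1)) q)

include hs hrel

lemma red1 : ∀ (b : ℕ) (j : ℤ),
    pdy^[b] (f0 j) = fun q => (-1:ℝ)^b * pdx^[b] (f0 (j - b)) q := by
  have hrel' : ∀ j : ℤ, pdy (f0 j) = fun q => (-1:ℝ) * pdx (f0 (j-1)) q := by
    intro j; rw [hrel j]; funext q; ring
  intro b
  induction b with
  | zero => intro j; funext q; simp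
  | succ b ih =>
    intro j
    rw [Function.iterate_succ_apply, hrel' j,
      pdy_iter_cmul (smooth_pdx (hs (j-1))) (-1) b,
      pdy_iter_pdx (hs (j-1)) b, ih (j-1),
      pdx_cmul (smooth_pdx_iter (hs (j-1-b)) b)]
    funext q
    rw [← Function.iterate_succ_apply' pdx b,
      show j - 1 - (b:ℤ) = j - ((b+1 : ℕ) : ℤ) by push_cast; ring]
    ring

lemma red2 : ∀ (a : ℕ) (j : ℤ),
    pdx^[a] (f0 j) = fun q => (-1:ℝ)^a * pdy^[a] (f0 (j + a)) q := by
  have hrel2 : ∀ j : ℤ, pdx (f0 j) = fun q => (-1:ℝ) * pdy (f0 (j+1)) q := by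
    intro j; funext q
    have h := congrFun (hrel (j+1)) q
    simp only [show j+1-1 = j by ring] at h
    linarith
  intro a
  induction a with
  | zero => intro j; funext q; simp
  | succ a ih =>
    intro j
    rw [Function.iterate_succ_apply, hrel2 j,
      pdx_iter_cmul (smooth_pdy (hs (j+1))) (-1) a,
      pdx_iter_pdy (hs (j+1)) a, ih (j+1),
      pdy_cmul (smooth_pdy_iter (hs (j+1+a)) a)]
    funext q
    rw [← Function.iterate_succ_apply' pdy a,
      show j + 1 + (a:ℤ) = j + ((a+1 : ℕ) : ℤ) by push_cast; ring]
    ring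

variable (hzero : ∀ j : ℤ, (j < 0 ∨ (N:ℤ) < j) → f0 j = 0)
include hzero

lemma mono_zero (a b : ℕ) (j : ℤ) (h : j - b < 0 ∨ (N:ℤ) < j + a) :
    pdx^[a] (pdy^[b] (f0 j)) = fun _ => 0 := by
  rw [red1 hs hrel b j, pdx_iter_cmul (smooth_pdx_iter (hs (j-b)) b) _ a,
    ← Function.iterate_add_apply pdx a b]
  rcases h with h | h
  · rw [show f0 (j - b) = fun _ => 0 from hzero _ (Or.inl (by omega)), pdx_iter_zero]
    funext q; simp
  · rw [red2 hs hrel (a+b) (j - b),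
      show f0 (j - b + ((a+b:ℕ):ℤ)) = fun _ => 0 from hzero _ (Or.inr (by push_cast; omega)),
      pdy_iter_zero]
    funext q; simp

lemma Dmono_zero (m k a b : ℕ) (j : ℤ)
    (h : j - ((k:ℤ)+b) < 0 ∨ (N:ℤ) < j + ((m:ℤ)+a)) :
    pdx^[m] (pdy^[k] (pdx^[a] (pdy^[b] (f0 j)))) = fun _ => 0 := by
  rw [Dmono (hs j) m k a b]
  exact mono_zero hs hrel hzero (m+a) (k+b) j (by push_cast at h ⊢; omega)

end reduction

section Dlayer

lemma D_cmul (m k : ℕ) {A : ℝ × ℝ → ℝ} (hA : Smooth A) (c : ℝ) :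
    pdx^[m] (pdy^[k] (fun q => c * A q)) = fun q => c * pdx^[m] (pdy^[k] A) q := by
  rw [pdy_iter_cmul hA c k, pdx_iter_cmul (smooth_pdy_iter hA k) c m]

lemma D_add (m k : ℕ) {A B : ℝ × ℝ → ℝ} (hA : Smooth A) (hB : Smooth B) :
    pdx^[m] (pdy^[k] (fun q => A q + B q))
      = fun q => pdx^[m] (pdy^[k] A) q + pdx^[m] (pdy^[k] B) q := by
  rw [pdy_iter_add hA hB k, pdx_iter_add (smooth_pdy_iter hA k) (smooth_pdy_iter hB k) m]

lemma D_zero_cmul (m k : ℕ) {A : ℝ × ℝ → ℝ} (hA : Smooth A) (c : ℝ)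
    (h : pdx^[m] (pdy^[k] A) = fun _ => 0) :
    pdx^[m] (pdy^[k] (fun q => c * A q)) = fun _ => 0 := by
  rw [D_cmul m k hA c, h]; funext q; simp

lemma D_zero_add (m k : ℕ) {A B : ℝ × ℝ → ℝ} (hA : Smooth A) (hB : Smooth B)
    (h1 : pdx^[m] (pdy^[k] A) = fun _ => 0) (h2 : pdx^[m] (pdy^[k] B) = fun _ => 0) :
    pdx^[m] (pdy^[k] (fun q => A q + B q)) = fun _ => 0 := by
  rw [D_add m k hA hB, h1, h2]; funext q; simp

lemma D_zero_pdx (m k : ℕ) {A : ℝ × ℝ → ℝ} (hA : Smooth A)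
    (h : pdx^[m+1] (pdy^[k] A) = fun _ => 0) :
    pdx^[m] (pdy^[k] (pdx A)) = fun _ => 0 := by
  rw [pdy_iter_pdx hA k, ← Function.iterate_succ_apply pdx m (pdy^[k] A)]
  exact h

lemma D_zero_pdy (m k : ℕ) {A : ℝ × ℝ → ℝ}
    (h : pdx^[m] (pdy^[k+1] A) = fun _ => 0) :
    pdx^[m] (pdy^[k] (pdy A)) = fun _ => 0 := by
  rw [← Function.iterate_succ_apply pdy k A]; exact h

lemma D_zero_pdx_iter (m k n : ℕ) {A : ℝ × ℝ → ℝ} (hA : Smooth A)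
    (h : pdx^[m+n] (pdy^[k] A) = fun _ => 0) :
    pdx^[m] (pdy^[k] (pdx^[n] A)) = fun _ => 0 := by
  rw [← pdx_pdy_iter_comm hA n k, ← Function.iterate_add_apply pdx m n]; exact h

lemma D_zero_pdy_iter (m k n : ℕ) {A : ℝ × ℝ → ℝ}
    (h : pdx^[m] (pdy^[k+n] A) = fun _ => 0) :
    pdx^[m] (pdy^[k] (pdy^[n] A)) = fun _ => 0 := by
  rw [← Function.iterate_add_apply pdy k n]; exact h

lemma pdx_finsum {s : Finset ℕ} {F : ℕ → ℝ × ℝ → ℝ} (hF : ∀ i ∈ s, Smooth (F i)) :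
    pdx (fun q => ∑ i ∈ s, F i q) = fun q => ∑ i ∈ s, pdx (F i) q := by
  funext q
  show fderiv ℝ (fun p => ∑ i ∈ s, F i p) q (1,0) = _
  rw [fderiv_fun_sum (fun i hi => (sm_diff (hF i hi) q))]
  simp [pdx]

lemma pdy_finsum {s : Finset ℕ} {F : ℕ → ℝ × ℝ → ℝ} (hF : ∀ i ∈ s, Smooth (F i)) :
    pdy (fun q => ∑ i ∈ s, F i q) = fun q => ∑ i ∈ s, pdy (F i) q := by
  funext q
  show fderiv ℝ (fun p => ∑ i ∈ s, F i p) q (0,1) = _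
  rw [fderiv_fun_sum (fun i hi => (sm_diff (hF i hi) q))]
  simp [pdy]

lemma pdx_iter_finsum {s : Finset ℕ} {F : ℕ → ℝ × ℝ → ℝ} (hF : ∀ i ∈ s, Smooth (F i)) (n : ℕ) :
    pdx^[n] (fun q => ∑ i ∈ s, F i q) = fun q => ∑ i ∈ s, pdx^[n] (F i) q := by
  induction n generalizing F with
  | zero => rfl
  | succ n ih =>
    rw [Function.iterate_succ_apply, pdx_finsum hF, ih (fun i hi => smooth_pdx (hF i hi))]
    funext q
    exact Finset.sum_congr rfl fun i hi => by rw [← Function.iterate_succ_apply pdx n (F i)]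

lemma pdy_iter_finsum {s : Finset ℕ} {F : ℕ → ℝ × ℝ → ℝ} (hF : ∀ i ∈ s, Smooth (F i)) (n : ℕ) :
    pdy^[n] (fun q => ∑ i ∈ s, F i q) = fun q => ∑ i ∈ s, pdy^[n] (F i) q := by
  induction n generalizing F with
  | zero => rfl
  | succ n ih =>
    rw [Function.iterate_succ_apply, pdy_finsum hF, ih (fun i hi => smooth_pdy (hF i hi))]
    funext q
    exact Finset.sum_congr rfl fun i hi => by rw [← Function.iterate_succ_apply pdy n (F i)]

lemma D_zero_sum (m k : ℕ) {s : Finset ℕ} {F : ℕ → ℝ × ℝ → ℝ} (hF : ∀ i ∈ s, Smooth (F i))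
    (h : ∀ i ∈ s, pdx^[m] (pdy^[k] (F i)) = fun _ => 0) :
    pdx^[m] (pdy^[k] (fun q => ∑ i ∈ s, F i q)) = fun _ => 0 := by
  rw [pdy_iter_finsum hF k, pdx_iter_finsum (fun i hi => smooth_pdy_iter (hF i hi) k) m]
  funext q
  exact Finset.sum_eq_zero fun i hi => by rw [h i hi]

end Dlayer

lemma D_zero_fun (m k : ℕ) : pdx^[m] (pdy^[k] ((0 : ℝ × ℝ → ℝ))) = fun _ => 0 := by
  show pdx^[m] (pdy^[k] (fun _ => 0)) = _
  rw [pdy_iter_zero, pdx_iter_zero]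

lemma telescope (M : ℕ) (W U : ℕ → ℝ) (hW0 : W 0 = 0) (hUM : U M = 0)
    (hWU : ∀ j, j < M → W (j+1) = - U j) :
    ∑ j ∈ Finset.range (M+1), (W j + U j) = 0 := by
  rw [Finset.sum_add_distrib, Finset.sum_range_succ' W M, Finset.sum_range_succ U M, hW0, hUM]
  rw [Finset.sum_congr rfl (fun j hj => hWU j (Finset.mem_range.mp hj))]
  simp

section Qpart

variable {N : ℕ} {f0 : ℤ → ℝ × ℝ → ℝ}

lemma smooth_phi1 (hs : ∀ j : ℤ, Smooth (f0 j)) (j : ℤ) : Smooth (phi1 N f0 j) :=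
  smooth_addf (smooth_cmul (smooth_pdx (hs _)) _) (smooth_cmul (smooth_pdy (hs _)) _)

lemma smooth_phi2 (hs : ∀ j : ℤ, Smooth (f0 j)) (i : ℤ) : Smooth (phi2 N f0 i) := by
  unfold phi2
  split
  · exact contDiff_const
  · exact smooth_cmul (ContDiff.sum fun a _ =>
      smooth_cmul (smooth_pdx_iter (smooth_pdy_iter (hs _) _) _) _) _

lemma phi2_eq (i : ℤ) (hi : i ≠ -1) : phi2 N f0 i = fun q =>
    (1 / 2) * ∑ a ∈ Finset.range 3,
      intChoose (i + (a : ℤ)) (a : ℤ) * intChoose ((N : ℤ) - i - (a : ℤ)) (2 - (a : ℤ)) *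
        (pdx^[a] (pdy^[2 - a] (f0 (i + (a : ℤ))))) q := by
  unfold phi2
  rw [if_neg hi]

lemma phi2_neg_one : phi2 N f0 (-1) = fun _ => 0 := by
  unfold phi2
  rw [if_pos rfl]
  rfl

lemma Qzero (hs : ∀ j : ℤ, Smooth (f0 j))
    (hrel : ∀ j : ℤ, pdy (f0 j) = fun q => -pdx (f0 (j-1)) q)
    (hzero : ∀ j : ℤ, (j < 0 ∨ (N:ℤ) < j) → f0 j = 0)
    (j m : ℕ) (hm : m + j + 1 = N) :
    pdx^[m] (pdy^[j] (Q2 N f0 (j:ℤ))) = fun _ => 0 := by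
  have hQ : Q2 N f0 (j:ℤ) = fun q =>
      2 * pdx (phi2 N f0 ((j:ℤ) - 1)) q + 2 * pdy (phi2 N f0 (j:ℤ)) q +
        (pdx^[2] (phi1 N f0 (j:ℤ))) q + (pdy^[2] (phi1 N f0 (j:ℤ))) q := rfl
  rw [hQ]
  have s1 : Smooth (pdx (phi2 N f0 ((j:ℤ)-1))) := smooth_pdx (smooth_phi2 hs _)
  have s2 : Smooth (pdy (phi2 N f0 (j:ℤ))) := smooth_pdy (smooth_phi2 hs _)
  have s3 : Smooth (pdx^[2] (phi1 N f0 (j:ℤ))) := smooth_pdx_iter (smooth_phi1 hs _) 2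
  have s4 : Smooth (pdy^[2] (phi1 N f0 (j:ℤ))) := smooth_pdy_iter (smooth_phi1 hs _) 2
  have hφ : phi1 N f0 (j:ℤ) = fun q =>
      (((j:ℤ) : ℝ) + 1) / 2 * pdx (f0 ((j:ℤ) + 1)) q
        + ((N : ℝ) - ((j:ℤ) : ℝ)) / 2 * pdy (f0 (j:ℤ)) q := rfl
  apply D_zero_add m j
    (smooth_addf (smooth_addf (smooth_cmul s1 2) (smooth_cmul s2 2)) s3) s4
  · apply D_zero_add m j (smooth_addf (smooth_cmul s1 2) (smooth_cmul s2 2)) s3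
    · apply D_zero_add m j (smooth_cmul s1 2) (smooth_cmul s2 2)
      · -- 2 * pdx (phi2 (j-1))
        apply D_zero_cmul m j s1 2
        by_cases hj : j = 0
        · subst hj
          rw [show ((0:ℕ):ℤ) - 1 = -1 by norm_num, phi2_neg_one, pdx_zero,
            pdy_iter_zero, pdx_iter_zero]
        · apply D_zero_pdx m j (smooth_phi2 hs _)
          rw [phi2_eq ((j:ℤ) - 1) (by omega)]
          apply D_zero_cmul (m+1) j (ContDiff.sum fun a _ =>
            smooth_cmul (smooth_pdx_iter (smooth_pdy_iter (hs _) _) _) _)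
          apply D_zero_sum (m+1) j (fun i _ =>
            smooth_cmul (smooth_pdx_iter (smooth_pdy_iter (hs _) _) _) _)
          intro i hi
          simp only [Finset.mem_range] at hi
          apply D_zero_cmul (m+1) j (smooth_pdx_iter (smooth_pdy_iter (hs _) _) _)
          exact Dmono_zero hs hrel hzero (m+1) j i (2-i) ((j:ℤ) - 1 + (i:ℤ)) (by omega)
      · -- 2 * pdy (phi2 j)
        apply D_zero_cmul m j s2 2
        apply D_zero_pdy m j
        rw [phi2_eq ((j:ℕ):ℤ) (by omega)]
        apply D_zero_cmul m (j+1) (ContDiff.sum fun a _ =>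
          smooth_cmul (smooth_pdx_iter (smooth_pdy_iter (hs _) _) _) _)
        apply D_zero_sum m (j+1) (fun i _ =>
          smooth_cmul (smooth_pdx_iter (smooth_pdy_iter (hs _) _) _) _)
        intro i hi
        simp only [Finset.mem_range] at hi
        apply D_zero_cmul m (j+1) (smooth_pdx_iter (smooth_pdy_iter (hs _) _) _)
        exact Dmono_zero hs hrel hzero m (j+1) i (2-i) ((j:ℤ) + (i:ℤ)) (by omega)
    · -- pdx^[2] (phi1 j)
      apply D_zero_pdx_iter m j 2 (smooth_phi1 hs _)
      rw [hφ]
      apply D_zero_add (m+2) j (smooth_cmul (smooth_pdx (hs _)) _)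
        (smooth_cmul (smooth_pdy (hs _)) _)
      · apply D_zero_cmul (m+2) j (smooth_pdx (hs _))
        apply D_zero_pdx (m+2) j (hs _)
        exact mono_zero hs hrel hzero (m+2+1) j ((j:ℤ)+1) (by omega)
      · apply D_zero_cmul (m+2) j (smooth_pdy (hs _))
        apply D_zero_pdy (m+2) j
        exact mono_zero hs hrel hzero (m+2) (j+1) ((j:ℤ)) (by omega)
  · -- pdy^[2] (phi1 j)
    apply D_zero_pdy_iter m j 2
    rw [hφ]
    apply D_zero_add m (j+2) (smooth_cmul (smooth_pdx (hs _)) _)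
      (smooth_cmul (smooth_pdy (hs _)) _)
    · apply D_zero_cmul m (j+2) (smooth_pdx (hs _))
      apply D_zero_pdx m (j+2) (hs _)
      exact mono_zero hs hrel hzero (m+1) (j+2) ((j:ℤ)+1) (by omega)
    · apply D_zero_cmul m (j+2) (smooth_pdy (hs _))
      apply D_zero_pdy m (j+2)
      exact mono_zero hs hrel hzero m (j+2+1) ((j:ℤ)) (by omega)

end Qpart

/-- if the leading-order equations `∂_x f_{j−1,0} + ∂_y f_{j,0} = 0` hold and
the `ℓ = 1` quantum determining equations
`2(∂_x f_{j−1,2} + ∂_y f_{j,2}) = (j+1) f_{j+1,0} ∂_x V + (N−j) f_{j,0} ∂_y V + ħ² Q_{j,2}`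
hold for all `0 ≤ j ≤ N−1`, then `V` satisfies the same linear compatibility PDE as in
the classical case. -/
theorem stmt_7 (N : ℕ) (hN : 2 ≤ N) (hbar : ℝ)
    (V : ℝ × ℝ → ℝ) (hV : ContDiff ℝ (⊤ : ℕ∞) V)
    (f0 : ℤ → ℝ × ℝ → ℝ)
    (hf0 : ∀ j : ℤ, 0 ≤ j → j ≤ (N : ℤ) → ContDiff ℝ (⊤ : ℕ∞) (f0 j))
    (hf0zero : ∀ j : ℤ, (j < 0 ∨ (N : ℤ) < j) → f0 j = 0)
    (hlead : ∀ j : ℤ, 0 ≤ j → j ≤ (N : ℤ) + 1 →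
      ∀ q : ℝ × ℝ, pdx (f0 (j - 1)) q + pdy (f0 j) q = 0)
    (f2 : ℤ → ℝ × ℝ → ℝ)
    (hf2 : ∀ j : ℤ, 0 ≤ j → j ≤ (N : ℤ) - 2 → ContDiff ℝ (⊤ : ℕ∞) (f2 j))
    (hf2zero : ∀ j : ℤ, (j < 0 ∨ (N : ℤ) - 2 < j) → f2 j = 0)
    (hdet : ∀ j : ℕ, j < N → ∀ q : ℝ × ℝ,
      2 * (pdx (f2 ((j : ℤ) - 1)) q + pdy (f2 (j : ℤ)) q) =
        ((j : ℝ) + 1) * f0 ((j : ℤ) + 1) q * pdx V q +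
          ((N : ℝ) - (j : ℝ)) * f0 (j : ℤ) q * pdy V q +
          hbar ^ 2 * Q2 N f0 (j : ℤ) q) :
    ∀ q : ℝ × ℝ,
      ∑ j ∈ Finset.range N, (-1 : ℝ) ^ j *
        (pdx^[N - 1 - j] (pdy^[j] (fun p =>
          ((j : ℝ) + 1) * f0 ((j : ℤ) + 1) p * pdx V p +
            ((N : ℝ) - (j : ℝ)) * f0 (j : ℤ) p * pdy V p))) q = 0 := by
  intro q
  have hf0' : ∀ j : ℤ, Smooth (f0 j) := by
    intro j
    by_cases h : 0 ≤ j ∧ j ≤ (N:ℤ)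
    · exact hf0 j h.1 h.2
    · rw [hf0zero j (by omega)]; exact contDiff_const
  have hf2' : ∀ j : ℤ, Smooth (f2 j) := by
    intro j
    by_cases h : 0 ≤ j ∧ j ≤ (N:ℤ) - 2
    · exact hf2 j h.1 h.2
    · rw [hf2zero j (by omega)]; exact contDiff_const
  have hrel : ∀ j : ℤ, pdy (f0 j) = fun q => -pdx (f0 (j-1)) q := by
    intro j
    by_cases h : 0 ≤ j ∧ j ≤ (N:ℤ) + 1
    · funext p; have := hlead j h.1 h.2 p; linarith
    · have h1 : f0 j = 0 := hf0zero j (by omega)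
      have h2 : f0 (j-1) = 0 := hf0zero (j-1) (by omega)
      rw [h1, h2]
      show pdy (fun _ => 0) = fun q => -pdx (fun _ => 0) q
      rw [pdy_zero, pdx_zero]
      funext p; simp
  -- rewrite each summand
  have hterm : ∀ j : ℕ, j < N →
      pdx^[N - 1 - j] (pdy^[j] (fun p =>
          ((j : ℝ) + 1) * f0 ((j : ℤ) + 1) p * pdx V p +
            ((N : ℝ) - (j : ℝ)) * f0 (j : ℤ) p * pdy V p))
        = fun p => 2 * pdx^[N - 1 - j + 1] (pdy^[j] (f2 ((j:ℤ) - 1))) p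
            + 2 * pdx^[N - 1 - j] (pdy^[j+1] (f2 (j:ℤ))) p := by
    intro j hj
    have hm : (N - 1 - j) + j + 1 = N := by omega
    have hg : (fun p =>
        ((j : ℝ) + 1) * f0 ((j : ℤ) + 1) p * pdx V p +
          ((N : ℝ) - (j : ℝ)) * f0 (j : ℤ) p * pdy V p)
        = fun p => 2 * pdx (f2 ((j:ℤ) - 1)) p
            + (2 * pdy (f2 (j:ℤ)) p + (-(hbar^2)) * Q2 N f0 (j:ℤ) p) := by
      funext p
      have h := hdet j hj p
      linarith
    have smQ : Smooth (Q2 N f0 (j:ℤ)) :=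
      smooth_addf (smooth_addf (smooth_addf
        (smooth_cmul (smooth_pdx (smooth_phi2 hf0' _)) 2)
        (smooth_cmul (smooth_pdy (smooth_phi2 hf0' _)) 2))
        (smooth_pdx_iter (smooth_phi1 hf0' _) 2))
        (smooth_pdy_iter (smooth_phi1 hf0' _) 2)
    rw [hg, D_add (N-1-j) j (smooth_cmul (smooth_pdx (hf2' ((j:ℤ)-1))) 2)
        (smooth_addf (smooth_cmul (smooth_pdy (hf2' (j:ℤ))) 2) (smooth_cmul smQ (-(hbar^2)))),
      D_add (N-1-j) j (smooth_cmul (smooth_pdy (hf2' (j:ℤ))) 2) (smooth_cmul smQ (-(hbar^2))),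
      D_cmul (N-1-j) j (smooth_pdx (hf2' ((j:ℤ)-1))) 2,
      D_cmul (N-1-j) j (smooth_pdy (hf2' (j:ℤ))) 2,
      D_cmul (N-1-j) j smQ (-(hbar^2)),
      Qzero hf0' hrel hf0zero j (N-1-j) hm,
      pdy_iter_pdx (hf2' ((j:ℤ)-1)) j,
      ← Function.iterate_succ_apply pdx (N-1-j) (pdy^[j] (f2 ((j:ℤ)-1))),
      ← Function.iterate_succ_apply pdy j (f2 (j:ℤ))]
    funext p
    simp
  have hsum : ∀ j ∈ Finset.range N,
      (-1 : ℝ) ^ j *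
        (pdx^[N - 1 - j] (pdy^[j] (fun p =>
          ((j : ℝ) + 1) * f0 ((j : ℤ) + 1) p * pdx V p +
            ((N : ℝ) - (j : ℝ)) * f0 (j : ℤ) p * pdy V p))) q
      = (-1 : ℝ) ^ j * 2 * pdx^[N - 1 - j + 1] (pdy^[j] (f2 ((j:ℤ) - 1))) q
          + (-1 : ℝ) ^ j * 2 * pdx^[N - 1 - j] (pdy^[j+1] (f2 (j:ℤ))) q := by
    intro j hj
    rw [congrFun (hterm j (Finset.mem_range.mp hj)) q]
    ring
  rw [Finset.sum_congr rfl hsum]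
  obtain ⟨M, rfl⟩ : ∃ M, N = M + 1 := ⟨N - 1, by omega⟩
  apply telescope
  · -- W 0 = 0
    rw [show ((0:ℕ):ℤ) - 1 = (-1 : ℤ) by norm_num, hf2zero (-1) (by omega), D_zero_fun]
    simp
  · -- U M = 0
    rw [hf2zero (M:ℤ) (by omega), D_zero_fun]
    simp
  · intro j hj
    rw [show (((j+1 : ℕ)):ℤ) - 1 = ((j:ℕ):ℤ) by push_cast; ring,
      show M + 1 - 1 - (j+1) + 1 = M + 1 - 1 - j from by omega]
    ring
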